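/- For any two permutations π, ρ of a finite set I, #(π) + #(ρ) + #(πρ) ≤ |I| + 2·#(Π(π) ∨ Π(ρ)), where #(σ) is the number of cycles of σ and Π(σ) is the partition of I into orbits of σ. -/

import Mathlib

/-- The number of cycles (orbits, including fixed points) of a permutation. -/
noncomputable def cycleCount {I : Type*} (σ : Equiv.Perm I) : ℕ :=
  Nat.card (MulAction.orbitRel.Quotient (Subgroup.zpowers σ) I)

/-- The number of blocks of the join `Π(π₁) ∨ Π(π₂)` of the orbit partitions. -/
noncomputable def jointOrbitCount {I : Type*} (π₁ π₂ : Equiv.Perm I) : ℕ :=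
  Nat.card (MulAction.orbitRel.Quotient
    (Subgroup.closure {π₁, π₂} : Subgroup (Equiv.Perm I)) I)

/-- A pairing of `I`: a fixed-point-free involution. -/
def IsPairing {I : Type*} (π : Equiv.Perm I) : Prop :=
  π * π = 1 ∧ ∀ x, π x ≠ x

namespace GenusAux

open Equiv Equiv.Perm MulAction Subgroup

variable {I : Type*}

/-! ### Generic counting lemmas -/

lemma card_succ_le {α β : Type*} [Finite β] (f : α → β) (hf : Function.Injective f)
    (b : β) (hb : ∀ a, f a ≠ b) : Nat.card α + 1 ≤ Nat.card β := by
  have : Finite α := Finite.of_injective f hf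
  have : Function.Injective (fun o : Option α => o.elim b f) := by
    rintro (_ | x) (_ | y) h
    · rfl
    · exact absurd h.symm (hb y)
    · exact absurd h (hb x)
    · exact congrArg some (hf h)
  simpa [Finite.card_option] using Nat.card_le_card_of_injective _ this

/-! ### Orbit-count lemmas for subgroups -/

lemma orbCount_le_of_le [Finite I] {H K : Subgroup (Perm I)} (hHK : H ≤ K) :
    Nat.card (orbitRel.Quotient K I) ≤ Nat.card (orbitRel.Quotient H I) := by
  have mono : ∀ x y : I, (orbitRel H I) x y → (orbitRel K I) x y := by
    intro x y h
    obtain ⟨⟨g, hg⟩, hgx⟩ := MulAction.orbitRel_apply.mp h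
    exact MulAction.orbitRel_apply.mpr ⟨⟨g, hHK hg⟩, hgx⟩
  apply Nat.card_le_card_of_surjective (Quotient.map' id mono)
  rintro ⟨x⟩
  exact ⟨Quotient.mk _ x, rfl⟩

/-- The key structural fact: adjoining a swap to a generating set merges at most the
orbits of `a` and `b`. -/
lemma orbitRel_closure_insert_swap [DecidableEq I] (S : Set (Perm I)) (a b : I) {x y : I}
    (h : (orbitRel (closure (insert (Equiv.swap a b) S) : Subgroup (Perm I)) I) x y) :
    (orbitRel (closure S : Subgroup (Perm I)) I) x y ∨
      ((orbitRel (closure S : Subgroup (Perm I)) I) x a ∧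
        (orbitRel (closure S : Subgroup (Perm I)) I) y b) ∨
      ((orbitRel (closure S : Subgroup (Perm I)) I) x b ∧
        (orbitRel (closure S : Subgroup (Perm I)) I) y a) := by
  set s : Setoid I := orbitRel (closure S : Subgroup (Perm I)) I with hs
  let R : I → I → Prop := fun u v => s u v ∨ (s u a ∧ s v b) ∨ (s u b ∧ s v a)
  have hrel : ∀ (g : Perm I), g ∈ (closure S : Subgroup (Perm I)) → ∀ z : I, s (g z) z :=
    fun g hg z => MulAction.orbitRel_apply.mpr ⟨⟨g, hg⟩, rfl⟩
  have hRsymm : ∀ {u v}, R u v → R v u := by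
    rintro u v (h | ⟨h1, h2⟩ | ⟨h1, h2⟩)
    · exact Or.inl (s.symm h)
    · exact Or.inr (Or.inr ⟨h2, h1⟩)
    · exact Or.inr (Or.inl ⟨h2, h1⟩)
  have hRtrans : ∀ {u v w}, R u v → R v w → R u w := by
    rintro u v w (h1 | ⟨h1a, h1b⟩ | ⟨h1a, h1b⟩) (h2 | ⟨h2a, h2b⟩ | ⟨h2a, h2b⟩)
    · exact Or.inl (s.trans h1 h2)
    · exact Or.inr (Or.inl ⟨s.trans h1 h2a, h2b⟩)
    · exact Or.inr (Or.inr ⟨s.trans h1 h2a, h2b⟩)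
    · exact Or.inr (Or.inl ⟨h1a, s.trans (s.symm h2) h1b⟩)
    · exact Or.inl (s.trans (s.trans h1a (s.symm h2a)) (s.trans h1b (s.symm h2b)))
    · exact Or.inl (s.trans h1a (s.symm h2b))
    · exact Or.inr (Or.inr ⟨h1a, s.trans (s.symm h2) h1b⟩)
    · exact Or.inl (s.trans h1a (s.symm h2b))
    · exact Or.inl (s.trans (s.trans h1a (s.symm h2a)) (s.trans h1b (s.symm h2b)))
  have main : ∀ g ∈ (closure (insert (Equiv.swap a b) S) : Subgroup (Perm I)),
      ∀ z : I, R (g z) z := by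
    intro g hg
    refine closure_induction ?_ ?_ ?_ ?_ hg
    · rintro g hgmem z
      rcases Set.mem_insert_iff.mp hgmem with rfl | hgS
      · rcases eq_or_ne z a with rfl | hza
        · rw [Equiv.swap_apply_left]
          exact Or.inr (Or.inr ⟨s.refl b, s.refl z⟩)
        · rcases eq_or_ne z b with rfl | hzb
          · rw [Equiv.swap_apply_right]
            exact Or.inr (Or.inl ⟨s.refl a, s.refl z⟩)
          · rw [Equiv.swap_apply_of_ne_of_ne hza hzb]
            exact Or.inl (s.refl z)
      · have : s (g z) z := hrel g (subset_closure hgS) z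
        exact Or.inl this
    · intro z
      simp only [Perm.one_apply]
      exact Or.inl (s.refl z)
    · intro g₁ g₂ _ _ ih₁ ih₂ z
      have : (g₁ * g₂) z = g₁ (g₂ z) := rfl
      rw [this]
      exact hRtrans (ih₁ (g₂ z)) (ih₂ z)
    · intro g _ ih z
      have := ih (g⁻¹ z)
      rw [show g (g⁻¹ z) = z from Equiv.apply_symm_apply g z] at this
      exact hRsymm this
  obtain ⟨⟨g, hg⟩, hgx⟩ := MulAction.orbitRel_apply.mp h
  have := main g hg y
  rw [show (g : Perm I) y = x from hgx] at this
  exact this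

lemma orbCount_le_insert_swap [Finite I] [DecidableEq I] (S : Set (Perm I)) (a b : I) :
    Nat.card (orbitRel.Quotient (closure S : Subgroup (Perm I)) I) ≤
      Nat.card (orbitRel.Quotient
        (closure (insert (Equiv.swap a b) S) : Subgroup (Perm I)) I) + 1 := by
  classical
  set s : Setoid I := orbitRel (closure S : Subgroup (Perm I)) I with hs
  set t : Setoid I := orbitRel (closure (insert (Equiv.swap a b) S) : Subgroup (Perm I)) I with ht
  have mono : ∀ x y : I, s x y → t x y := by
    intro x y h
    obtain ⟨⟨g, hg⟩, hgx⟩ := MulAction.orbitRel_apply.mp h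
    exact MulAction.orbitRel_apply.mpr ⟨⟨g, closure_mono (Set.subset_insert _ _) hg⟩, hgx⟩
  let f : Quotient s → Option (Quotient t) :=
    Quotient.lift (fun x : I => if s x b then none else some (Quotient.mk t x)) (by
      intro x y hxy
      by_cases hxb : s x b
      · rw [if_pos hxb, if_pos (show s y b from s.trans (s.symm hxy) hxb)]
      · rw [if_neg hxb, if_neg (show ¬ s y b from fun hyb => hxb (s.trans hxy hyb))]
        exact congrArg some (Quotient.sound (mono x y hxy))
      )
  have hfinj : Function.Injective f := by
    rintro ⟨x⟩ ⟨y⟩ h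
    replace h : (if s x b then none else some (Quotient.mk t x)) =
        (if s y b then none else some (Quotient.mk t y)) := h
    by_cases hxb : s x b
    · by_cases hyb : s y b
      · exact Quotient.sound (s.trans hxb (s.symm hyb))
      · rw [if_pos hxb, if_neg hyb] at h; exact absurd h.symm (Option.some_ne_none _)
    · by_cases hyb : s y b
      · rw [if_neg hxb, if_pos hyb] at h; exact absurd h (Option.some_ne_none _)
      · rw [if_neg hxb, if_neg hyb, Option.some_inj] at h
        rcases orbitRel_closure_insert_swap S a b (Quotient.exact h) with
          h' | ⟨h1, h2⟩ | ⟨h1, h2⟩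
        · exact Quotient.sound h'
        · exact absurd h2 hyb
        · exact absurd h1 hxb
  have hft : Finite (Quotient t) := Quotient.finite _
  have hfo : Finite (Option (Quotient t)) := by
    haveI := Fintype.ofFinite (Quotient t)
    exact Finite.of_fintype _
  calc Nat.card (Quotient s) ≤ Nat.card (Option (Quotient t)) :=
        Nat.card_le_card_of_injective f hfinj
    _ = Nat.card (Quotient t) + 1 := Finite.card_option

lemma orbCount_insert_swap_eq [DecidableEq I] (S : Set (Perm I)) (a b : I)
    (hab : (orbitRel (closure S : Subgroup (Perm I)) I) a b) :
    Nat.card (orbitRel.Quotient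
        (closure (insert (Equiv.swap a b) S) : Subgroup (Perm I)) I) =
      Nat.card (orbitRel.Quotient (closure S : Subgroup (Perm I)) I) := by
  set s : Setoid I := orbitRel (closure S : Subgroup (Perm I)) I with hs
  have hiff : ∀ x y : I,
      (orbitRel (closure (insert (Equiv.swap a b) S) : Subgroup (Perm I)) I) x y ↔ s x y := by
    intro x y
    constructor
    · intro h
      rcases orbitRel_closure_insert_swap S a b h with h' | ⟨h1, h2⟩ | ⟨h1, h2⟩
      · exact h'
      · exact s.trans h1 (s.trans hab (s.symm h2))
      · exact s.trans h1 (s.trans (s.symm hab) (s.symm h2))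
    · intro h
      obtain ⟨⟨g, hg⟩, hgx⟩ := MulAction.orbitRel_apply.mp h
      exact MulAction.orbitRel_apply.mpr ⟨⟨g, closure_mono (Set.subset_insert _ _) hg⟩, hgx⟩
  exact Nat.card_congr (Quotient.congrRight hiff)

/-! ### cycleCount via SameCycle -/

/-- The same-cycle setoid of a permutation. -/
def scSetoid (σ : Perm I) : Setoid I :=
  ⟨σ.SameCycle, ⟨SameCycle.refl σ, SameCycle.symm, SameCycle.trans⟩⟩

lemma cycleCount_eq_scQuot (σ : Perm I) :
    cycleCount σ = Nat.card (Quotient (scSetoid σ)) := by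
  apply Nat.card_congr
  apply Quotient.congrRight
  intro x y
  rw [MulAction.orbitRel_apply, MulAction.mem_orbit_iff]
  constructor
  · rintro ⟨⟨g, hg⟩, hgy⟩
    obtain ⟨k, rfl⟩ := Subgroup.mem_zpowers_iff.mp hg
    exact Equiv.Perm.SameCycle.symm ⟨k, hgy⟩
  · rintro ⟨k, hk⟩
    refine ⟨⟨σ ^ (-k), Subgroup.mem_zpowers_iff.mpr ⟨-k, rfl⟩⟩, ?_⟩
    show (σ ^ (-k)) y = x
    rw [← hk, ← Perm.mul_apply, ← zpow_add, neg_add_cancel, zpow_zero, Perm.one_apply]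

/-! ### traversal lemmas -/

lemma pow_mul_swap_apply [DecidableEq I] (σ : Perm I) (a b x : I) :
    ∀ k : ℕ, (∀ i < k, (σ ^ i) x ≠ a ∧ (σ ^ i) x ≠ b) →
      ((σ * Equiv.swap a b) ^ k) x = (σ ^ k) x
  | 0, _ => rfl
  | (k + 1), h => by
    have ih := pow_mul_swap_apply σ a b x k (fun i hi => h i (Nat.lt_succ_of_lt hi))
    have hk := h k (Nat.lt_succ_self k)
    rw [pow_succ', pow_succ', Perm.mul_apply, Perm.mul_apply, ih, Perm.mul_apply,
      Equiv.swap_apply_of_ne_of_ne hk.1 hk.2]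

lemma sameCycle_mul_swap_iff [Finite I] [DecidableEq I] {σ : Perm I} {a b x : I}
    (h : ∀ z, σ.SameCycle x z → z ≠ a ∧ z ≠ b) (y : I) :
    (σ * Equiv.swap a b).SameCycle x y ↔ σ.SameCycle x y := by
  have hpow : ∀ k : ℕ, ((σ * Equiv.swap a b) ^ k) x = (σ ^ k) x := fun k =>
    pow_mul_swap_apply σ a b x k (fun i _ => h _ ⟨(i : ℤ), by rw [zpow_natCast]⟩)
  constructor
  · intro hsc
    obtain ⟨i, -, hi⟩ := hsc.exists_pow_eq'
    exact ⟨(i : ℤ), by rw [zpow_natCast, ← hpow i, hi]⟩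
  · intro hsc
    obtain ⟨i, -, hi⟩ := hsc.exists_pow_eq'
    exact ⟨(i : ℤ), by rw [zpow_natCast, hpow i, hi]⟩

lemma reach [Finite I] [DecidableEq I] {σ : Perm I} {x a b : I}
    (h1 : σ.SameCycle x a) (h2 : ¬ σ.SameCycle x b) :
    (σ * Equiv.swap a b).SameCycle x a := by
  classical
  obtain ⟨k0, -, hk0⟩ := h1.exists_pow_eq'
  have hex : ∃ k : ℕ, (σ ^ k) x = a := ⟨k0, hk0⟩
  have hm : (σ ^ Nat.find hex) x = a := Nat.find_spec hex
  have htrav := pow_mul_swap_apply σ a b x (Nat.find hex) (fun i hi =>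
    ⟨Nat.find_min hex hi, fun hb => h2 ⟨(i : ℤ), by rw [zpow_natCast, hb]⟩⟩)
  exact ⟨(Nat.find hex : ℤ), by rw [zpow_natCast, htrav, hm]⟩

lemma reach_b [Finite I] [DecidableEq I] {σ : Perm I} {a b : I}
    (hab : ¬ σ.SameCycle a b) : (σ * Equiv.swap a b).SameCycle b a := by
  classical
  have hex : ∃ k : ℕ, 0 < k ∧ (σ ^ k) a = a :=
    ⟨orderOf σ, orderOf_pos σ, by rw [pow_orderOf_eq_one, Perm.one_apply]⟩
  obtain ⟨hmpos, hm⟩ := Nat.find_spec hex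
  obtain ⟨j, hj⟩ : ∃ j : ℕ, Nat.find hex = j + 1 :=
    ⟨Nat.find hex - 1, (Nat.succ_pred_eq_of_pos hmpos).symm⟩
  have htrav : ((σ * Equiv.swap a b) ^ j) (σ a) = (σ ^ j) (σ a) := by
    apply pow_mul_swap_apply
    intro i hi
    have hia : (σ ^ i) (σ a) = (σ ^ (i + 1)) a := by
      rw [pow_succ, Perm.mul_apply]
    constructor
    · rw [hia]
      intro hcon
      exact Nat.find_min hex (by omega) ⟨Nat.succ_pos i, hcon⟩
    · rw [hia]
      intro hcon
      exact hab ⟨((i + 1 : ℕ) : ℤ), by rw [zpow_natCast, hcon]⟩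
  refine ⟨((j + 1 : ℕ) : ℤ), ?_⟩
  rw [zpow_natCast, pow_succ, Perm.mul_apply]
  have hstep : (σ * Equiv.swap a b) b = σ a := by
    rw [Perm.mul_apply, Equiv.swap_apply_right]
  rw [hstep, htrav, ← Perm.mul_apply, ← pow_succ, ← hj, hm]

/-! ### The merge lemma -/

lemma merge [Finite I] [DecidableEq I] {σ : Perm I} {a b : I}
    (hne : a ≠ b) (hab : ¬ σ.SameCycle a b) :
    cycleCount (σ * Equiv.swap a b) + 1 ≤ cycleCount σ := by
  classical
  set τ := Equiv.swap a b with hτ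
  set σ' := σ * τ with hσ'def
  have hστ : σ' * τ = σ := by rw [hσ'def, mul_assoc, Equiv.swap_mul_self, mul_one]
  have hba : σ'.SameCycle b a := reach_b hab
  -- transfer of SameCycle along untouched orbits
  have key : ∀ x : I, ¬ σ'.SameCycle x a → ∀ y : I, (σ.SameCycle x y ↔ σ'.SameCycle x y) := by
    intro x hxa y
    have hxb : ¬ σ'.SameCycle x b := fun h => hxa (h.trans hba)
    have := sameCycle_mul_swap_iff (σ := σ') (a := a) (b := b) (x := x)
      (fun z hz => ⟨fun h => hxa (h ▸ hz), fun h => hxb (h ▸ hz)⟩) y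
    rw [hστ] at this
    exact this
  rw [cycleCount_eq_scQuot, cycleCount_eq_scQuot]
  set s : Setoid I := scSetoid σ with hs
  set t : Setoid I := scSetoid σ' with htt
  have hts : ∀ {u v : I}, t u v ↔ σ'.SameCycle u v := Iff.rfl
  have hss : ∀ {u v : I}, s u v ↔ σ.SameCycle u v := Iff.rfl
  let f : Quotient t → Quotient s :=
    Quotient.lift (fun x : I => if σ'.SameCycle x a then Quotient.mk s a else Quotient.mk s x) (by
      intro x y hxy
      have hxy' : σ'.SameCycle x y := hxy
      by_cases hxa : σ'.SameCycle x a
      · rw [if_pos hxa, if_pos (hxy'.symm.trans hxa)]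
      · rw [if_neg hxa, if_neg (fun hya => hxa (hxy'.trans hya))]
        exact Quotient.sound (hss.mpr ((key x hxa y).mpr hxy'))
      )
  have hfinj : Function.Injective f := by
    rintro ⟨x⟩ ⟨y⟩ h
    replace h : (if σ'.SameCycle x a then Quotient.mk s a else Quotient.mk s x) =
        (if σ'.SameCycle y a then Quotient.mk s a else Quotient.mk s y) := h
    by_cases hxa : σ'.SameCycle x a
    · by_cases hya : σ'.SameCycle y a
      · exact Quotient.sound (hts.mpr (hxa.trans hya.symm))
      · rw [if_pos hxa, if_neg hya] at h
        have hay : σ.SameCycle a y := Quotient.exact h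
        have hyb : ¬ σ.SameCycle y b := fun hyb => hab ((hay.symm.symm).trans hyb)
        have : ¬ σ.SameCycle y b := hyb
        have hya' : (σ * τ).SameCycle y a := reach hay.symm hyb
        exact absurd hya' hya
    · by_cases hya : σ'.SameCycle y a
      · rw [if_neg hxa, if_pos hya] at h
        have hax : σ.SameCycle a x := (Quotient.exact h.symm : σ.SameCycle a x)
        have hxb : ¬ σ.SameCycle x b := fun hxb => hab (hax.trans hxb)
        have hxa' : (σ * τ).SameCycle x a := reach hax.symm hxb
        exact absurd hxa' hxa
      · rw [if_neg hxa, if_neg hya] at h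
        have hxy : σ.SameCycle x y := Quotient.exact h
        exact Quotient.sound (hts.mpr ((key x hxa y).mp hxy))
  have hbmiss : ∀ q : Quotient t, f q ≠ Quotient.mk s b := by
    rintro ⟨x⟩ h
    replace h : (if σ'.SameCycle x a then Quotient.mk s a else Quotient.mk s x) =
        Quotient.mk s b := h
    by_cases hxa : σ'.SameCycle x a
    · rw [if_pos hxa] at h
      exact hab (Quotient.exact h)
    · rw [if_neg hxa] at h
      have hxb : σ.SameCycle x b := Quotient.exact h
      have hxa2 : ¬ σ.SameCycle x a := fun hxa2 => hab (hxa2.symm.trans hxb)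
      have : (σ * Equiv.swap b a).SameCycle x b := reach hxb hxa2
      rw [Equiv.swap_comm] at this
      exact hxa ((hts.mpr this |> hts.mp).trans hba)
  exact card_succ_le f hfinj (Quotient.mk s b) hbmiss

/-! ### consequences for cycle counts -/

lemma closure_insert_mul_swap_singleton [DecidableEq I] (σ : Perm I) (a b : I) :
    (closure (insert (Equiv.swap a b) {σ * Equiv.swap a b}) : Subgroup (Perm I)) =
      closure (insert (Equiv.swap a b) {σ}) := by
  have hτ : Equiv.swap a b * Equiv.swap a b = 1 := Equiv.swap_mul_self a b
  apply le_antisymm <;> rw [closure_le] <;> rintro g hg <;>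
    rcases Set.mem_insert_iff.mp hg with rfl | hg'
  · exact subset_closure (Set.mem_insert _ _)
  · rw [Set.mem_singleton_iff] at hg'
    subst hg'
    exact mul_mem (subset_closure (Set.mem_insert_of_mem _ rfl))
      (subset_closure (Set.mem_insert _ _))
  · exact subset_closure (Set.mem_insert _ _)
  · rw [Set.mem_singleton_iff] at hg'
    subst hg'
    have hmem : (g * Equiv.swap a b) * Equiv.swap a b ∈
        (closure (insert (Equiv.swap a b) {g * Equiv.swap a b}) : Subgroup (Perm I)) :=
      mul_mem (subset_closure (Set.mem_insert_of_mem _ rfl))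
        (subset_closure (Set.mem_insert _ _))
    rwa [mul_assoc, hτ, mul_one] at hmem

lemma closure_insert_mul_swap_pair [DecidableEq I] (π ρ : Perm I) (a b : I) :
    (closure (insert (Equiv.swap a b) {π, ρ * Equiv.swap a b}) : Subgroup (Perm I)) =
      closure (insert (Equiv.swap a b) {π, ρ}) := by
  have hτ : Equiv.swap a b * Equiv.swap a b = 1 := Equiv.swap_mul_self a b
  apply le_antisymm <;> rw [closure_le] <;> rintro g hg <;>
    rcases Set.mem_insert_iff.mp hg with rfl | hg'
  · exact subset_closure (Set.mem_insert _ _)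
  · rcases Set.mem_insert_iff.mp hg' with rfl | hg''
    · exact subset_closure (Set.mem_insert_of_mem _ (Set.mem_insert _ _))
    · rw [Set.mem_singleton_iff] at hg''
      subst hg''
      exact mul_mem
        (subset_closure (Set.mem_insert_of_mem _ (Set.mem_insert_of_mem _ rfl)))
        (subset_closure (Set.mem_insert _ _))
  · exact subset_closure (Set.mem_insert _ _)
  · rcases Set.mem_insert_iff.mp hg' with rfl | hg''
    · exact subset_closure (Set.mem_insert_of_mem _ (Set.mem_insert _ _))
    · rw [Set.mem_singleton_iff] at hg''
      subst hg''
      have hmem : (g * Equiv.swap a b) * Equiv.swap a b ∈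
          (closure (insert (Equiv.swap a b) {π, g * Equiv.swap a b}) : Subgroup (Perm I)) :=
        mul_mem
          (subset_closure (Set.mem_insert_of_mem _ (Set.mem_insert_of_mem _ rfl)))
          (subset_closure (Set.mem_insert _ _))
      rwa [mul_assoc, hτ, mul_one] at hmem

lemma cycleCount_eq_closure (σ : Perm I) :
    cycleCount σ = Nat.card (orbitRel.Quotient (closure {σ} : Subgroup (Perm I)) I) := by
  unfold cycleCount
  rw [Subgroup.zpowers_eq_closure]

lemma step [Finite I] [DecidableEq I] (σ : Perm I) (a b : I) :
    cycleCount (σ * Equiv.swap a b) ≤ cycleCount σ + 1 := by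
  calc cycleCount (σ * Equiv.swap a b)
      = Nat.card (orbitRel.Quotient
          (closure {σ * Equiv.swap a b} : Subgroup (Perm I)) I) := cycleCount_eq_closure _
    _ ≤ Nat.card (orbitRel.Quotient
          (closure (insert (Equiv.swap a b) {σ * Equiv.swap a b}) : Subgroup (Perm I)) I) + 1 :=
        orbCount_le_insert_swap _ a b
    _ = Nat.card (orbitRel.Quotient
          (closure (insert (Equiv.swap a b) {σ}) : Subgroup (Perm I)) I) + 1 := by
        rw [closure_insert_mul_swap_singleton]
    _ ≤ Nat.card (orbitRel.Quotient (closure {σ} : Subgroup (Perm I)) I) + 1 :=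
        Nat.add_le_add_right
          (orbCount_le_of_le (closure_mono (Set.subset_insert _ _))) 1
    _ = cycleCount σ + 1 := by rw [cycleCount_eq_closure]

lemma split [Finite I] [DecidableEq I] {σ : Perm I} {a : I} (ha : σ a ≠ a) :
    cycleCount σ + 1 ≤ cycleCount (σ * Equiv.swap a (σ a)) := by
  set b := σ a with hb
  set σ' := σ * Equiv.swap a b with hσ'
  have hfix : σ' b = b := by
    rw [hσ', Perm.mul_apply, Equiv.swap_apply_right, hb]
  have hne : a ≠ b := fun h => ha h.symm
  have hscb : ¬ σ'.SameCycle a b := by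
    intro h
    obtain ⟨k, hk⟩ := h.symm
    rw [Perm.zpow_apply_eq_self_of_apply_eq_self hfix k] at hk
    exact hne hk.symm
  have hmain := merge (σ := σ') hne hscb
  have : σ' * Equiv.swap a b = σ := by
    rw [hσ', mul_assoc, Equiv.swap_mul_self, mul_one]
  rw [this] at hmain
  exact hmain

lemma cycleCount_one [Finite I] : cycleCount (1 : Perm I) = Nat.card I := by
  unfold cycleCount
  apply Nat.card_congr
  refine ⟨Quotient.lift id ?_, Quotient.mk _, ?_, fun x => rfl⟩
  · intro x y hxy
    obtain ⟨⟨g, hg⟩, hgy⟩ := MulAction.orbitRel_apply.mp hxy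
    obtain ⟨k, hk⟩ := Subgroup.mem_zpowers_iff.mp hg
    rw [one_zpow] at hk
    subst hk
    exact hgy.symm ▸ rfl
  · rintro ⟨x⟩
    rfl

lemma closure_pair_one (π : Perm I) :
    (closure {π, (1 : Perm I)} : Subgroup (Perm I)) = zpowers π := by
  apply le_antisymm
  · rw [closure_le]
    rintro g hg
    rcases Set.mem_insert_iff.mp hg with rfl | hg'
    · exact mem_zpowers _
    · rw [Set.mem_singleton_iff] at hg'
      subst hg'
      exact one_mem _
  · rw [Subgroup.zpowers_eq_closure]
    exact closure_mono (Set.singleton_subset_iff.mpr (Set.mem_insert _ _))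

end GenusAux

theorem stmt7 {I : Type*} [Fintype I] (π ρ : Equiv.Perm I) :
    cycleCount π + cycleCount ρ + cycleCount (π * ρ) ≤
      Fintype.card I + 2 * jointOrbitCount π ρ := by
  classical
  have base : ∀ π₀ : Equiv.Perm I,
      cycleCount π₀ + cycleCount (1 : Equiv.Perm I) + cycleCount (π₀ * 1) ≤
        Fintype.card I + 2 * jointOrbitCount π₀ 1 := by
    intro π₀
    have h1 : cycleCount (1 : Equiv.Perm I) = Fintype.card I := by
      rw [GenusAux.cycleCount_one, Nat.card_eq_fintype_card]
    have h2 : jointOrbitCount π₀ 1 = cycleCount π₀ := by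
      unfold jointOrbitCount cycleCount
      rw [GenusAux.closure_pair_one]
    rw [mul_one, h1, h2]
    omega
  suffices H : ∀ (n : ℕ) (ρ : Equiv.Perm I), ρ.support.card ≤ n →
      cycleCount π + cycleCount ρ + cycleCount (π * ρ) ≤
        Fintype.card I + 2 * jointOrbitCount π ρ by exact H _ ρ le_rfl
  intro n
  induction n with
  | zero =>
    intro ρ hρ
    have hρ1 : ρ = 1 := by
      rw [← Equiv.Perm.support_eq_empty_iff]
      exact Finset.card_eq_zero.mp (Nat.le_zero.mp hρ)
    subst hρ1
    exact base π
  | succ n IH =>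
    intro ρ hρ
    rcases eq_or_ne ρ 1 with rfl | hρ1
    · exact base π
    · obtain ⟨a, ha⟩ : ∃ a, ρ a ≠ a := by
        by_contra hcon
        push_neg at hcon
        exact hρ1 (Equiv.ext hcon)
      set b := ρ a with hbdef
      have hne : a ≠ b := fun h => ha h.symm
      set ρ' := ρ * Equiv.swap a b with hρ'def
      have hττ : Equiv.swap a b * Equiv.swap a b = 1 := Equiv.swap_mul_self a b
      have hπρ : (π * ρ') * Equiv.swap a b = π * ρ := by
        rw [hρ'def, mul_assoc, mul_assoc, hττ, mul_one]
      -- support decreases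
      have hsupp : ρ'.support.card < ρ.support.card := by
        have hbfix : ρ b ≠ b := by
          intro h
          rw [hbdef] at h
          exact ha (ρ.injective h)
        have heq : ρ' = Equiv.swap b (ρ b) * ρ := by
          rw [hρ'def, Equiv.mul_swap_eq_swap_mul, ← hbdef]
        rw [heq]
        exact Equiv.Perm.card_support_swap_mul hbfix
      have hIH := IH ρ' (by omega)
      have hsplit : cycleCount ρ + 1 ≤ cycleCount ρ' := by
        have := GenusAux.split ha
        rw [← hbdef, ← hρ'def] at this
        exact this
      by_cases hcase :
        (MulAction.orbitRel (Subgroup.closure {π, ρ'} : Subgroup (Equiv.Perm I)) I) a b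
      · -- Case A : a and b are already in the same ⟨π, ρ'⟩-orbit
        have hstep : cycleCount (π * ρ) ≤ cycleCount (π * ρ') + 1 := by
          have := GenusAux.step (π * ρ') a b
          rw [hπρ] at this
          exact this
        have hk : jointOrbitCount π ρ' ≤ jointOrbitCount π ρ := by
          unfold jointOrbitCount
          rw [← GenusAux.orbCount_insert_swap_eq {π, ρ'} a b hcase]
          rw [hρ'def, GenusAux.closure_insert_mul_swap_pair π ρ a b]
          exact GenusAux.orbCount_le_of_le
            (Subgroup.closure_mono (Set.subset_insert _ _))
        omega
      · -- Case B : the swap merges two ⟨π, ρ'⟩-orbits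
        have hscc : ¬ (π * ρ').SameCycle a b := by
          intro hsc
          apply hcase
          obtain ⟨k, hk⟩ := hsc
          have hm : π * ρ' ∈ (Subgroup.closure {π, ρ'} : Subgroup (Equiv.Perm I)) :=
            mul_mem (Subgroup.subset_closure (Set.mem_insert _ _))
              (Subgroup.subset_closure (Set.mem_insert_of_mem _ rfl))
          refine MulAction.orbitRel_apply.mpr ⟨⟨(π * ρ') ^ (-k), Subgroup.zpow_mem _ hm _⟩, ?_⟩
          · show ((π * ρ') ^ (-k)) b = a
            rw [← hk, ← Equiv.Perm.mul_apply, ← zpow_add, neg_add_cancel, zpow_zero,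
              Equiv.Perm.one_apply]
        have hmergeB : cycleCount (π * ρ) + 1 ≤ cycleCount (π * ρ') := by
          have := GenusAux.merge hne hscc
          rw [hπρ] at this
          exact this
        have hkB : jointOrbitCount π ρ' ≤ jointOrbitCount π ρ + 1 := by
          have h1 := GenusAux.orbCount_le_insert_swap ({π, ρ'} : Set (Equiv.Perm I)) a b
          have h2 : (Subgroup.closure (insert (Equiv.swap a b) {π, ρ'}) :
                Subgroup (Equiv.Perm I)) =
              Subgroup.closure (insert (Equiv.swap a b) {π, ρ}) := by
            rw [hρ'def]
            exact GenusAux.closure_insert_mul_swap_pair π ρ a b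
          rw [h2] at h1
          have h3 := GenusAux.orbCount_le_of_le
            (H := (Subgroup.closure {π, ρ} : Subgroup (Equiv.Perm I)))
            (K := Subgroup.closure (insert (Equiv.swap a b) {π, ρ}))
            (Subgroup.closure_mono (Set.subset_insert _ _))
          unfold jointOrbitCount
          omega
        omega
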